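/- Let H be a symmetric n×n matrix, g ∈ ℝ^n with ‖g‖ ≤ U_g, ‖H‖ ≤ U_H, δ > 0, and suppose λ_min(H) + δ ≥ c > 0. Then the homogenized matrix F = [[H, g], [gᵀ, -δ]] has spectral gap λ₂(F) - λ_min(F) ≥ λ_min(H) + δ ≥ c. -/

import Mathlib

open Matrix

/-- The homogenized matrix `F = [[H, g], [gᵀ, -δ]]`. -/
noncomputable def homog {n : ℕ} (H : Matrix (Fin n) (Fin n) ℝ) (g : Fin n → ℝ) (δ : ℝ) :
    Matrix (Fin (n + 1)) (Fin (n + 1)) ℝ :=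
  Matrix.of fun i j =>
    if hi : (i : ℕ) < n then
      if hj : (j : ℕ) < n then H ⟨i, hi⟩ ⟨j, hj⟩ else g ⟨i, hi⟩
    else if hj : (j : ℕ) < n then g ⟨j, hj⟩ else -δ



lemma quadform_eq {m : Type*} [Fintype m] [DecidableEq m] {A : Matrix m m ℝ} (hA : A.IsHermitian)
    (x : m → ℝ) :
    x ⬝ᵥ (A *ᵥ x) = ∑ i, hA.eigenvalues i *
      ((star (hA.eigenvectorUnitary : Matrix m m ℝ) *ᵥ x) i)^2 := by
  set U : Matrix m m ℝ := (hA.eigenvectorUnitary : Matrix m m ℝ) with hU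
  set y := star U *ᵥ x with hy
  conv_lhs => rw [hA.spectral_theorem, Unitary.conjStarAlgAut_apply]
  rw [← hU, ← mulVec_mulVec, ← mulVec_mulVec, dotProduct_mulVec, ← mulVec_transpose]
  have hsU : Uᵀ = star U := by ext i j; simp [star, conjTranspose]
  rw [hsU, ← hy]
  simp only [mulVec_diagonal, dotProduct, Function.comp, sq]
  exact Finset.sum_congr rfl fun i _ => by simp only [RCLike.ofReal_real_eq_id, id]; ring

lemma normsq_eq {m : Type*} [Fintype m] [DecidableEq m] {A : Matrix m m ℝ} (hA : A.IsHermitian)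
    (x : m → ℝ) :
    x ⬝ᵥ x = ∑ i, ((star (hA.eigenvectorUnitary : Matrix m m ℝ) *ᵥ x) i)^2 := by
  set U : Matrix m m ℝ := (hA.eigenvectorUnitary : Matrix m m ℝ) with hU
  set y := star U *ᵥ x with hy
  have h1 : (U * star U) = 1 := Matrix.mem_unitaryGroup_iff.mp hA.eigenvectorUnitary.2
  have : ∑ i, (y i)^2 = y ⬝ᵥ y := by simp [dotProduct, sq]
  rw [this, hy, dotProduct_mulVec, ← mulVec_transpose]
  have hsU : (star U)ᵀ = U := by ext i j; simp [star, conjTranspose]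
  rw [hsU, mulVec_mulVec, h1, one_mulVec]

lemma rayleigh_lower {m : Type*} [Fintype m] [DecidableEq m] [Nonempty m] {A : Matrix m m ℝ}
    (hA : A.IsHermitian) (x : m → ℝ) :
    (⨅ i, hA.eigenvalues i) * (x ⬝ᵥ x) ≤ x ⬝ᵥ (A *ᵥ x) := by
  rw [quadform_eq hA x, normsq_eq hA x, Finset.mul_sum]
  exact Finset.sum_le_sum fun i _ =>
    mul_le_mul_of_nonneg_right (ciInf_le (Finite.bddBelow_range _) i) (sq_nonneg _)

lemma eigvec_dot {m : Type*} [Fintype m] [DecidableEq m] {A : Matrix m m ℝ}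
    (hA : A.IsHermitian) (i j : m) :
    ⇑(hA.eigenvectorBasis i) ⬝ᵥ ⇑(hA.eigenvectorBasis j) = if i = j then 1 else 0 := by
  have := orthonormal_iff_ite.mp hA.eigenvectorBasis.orthonormal i j
  rw [← this]
  simp [PiLp.inner_apply, dotProduct]
  exact Finset.sum_congr rfl fun _ _ => mul_comm _ _

lemma homog_cc {n : ℕ} (H : Matrix (Fin n) (Fin n) ℝ) (g : Fin n → ℝ) (δ : ℝ) (i j : Fin n) :
    homog H g δ i.castSucc j.castSucc = H i j := by
  simp [homog, Fin.is_lt]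

lemma homog_ll {n : ℕ} (H : Matrix (Fin n) (Fin n) ℝ) (g : Fin n → ℝ) (δ : ℝ) :
    homog H g δ (Fin.last n) (Fin.last n) = -δ := by
  simp [homog]

lemma homog_quadform {n : ℕ} (H : Matrix (Fin n) (Fin n) ℝ) (g : Fin n → ℝ) (δ : ℝ)
    (x : Fin (n + 1) → ℝ) (hx : x (Fin.last n) = 0) :
    x ⬝ᵥ (homog H g δ *ᵥ x) = (x ∘ Fin.castSucc) ⬝ᵥ (H *ᵥ (x ∘ Fin.castSucc)) := by
  have h1 : ∀ i : Fin n, (homog H g δ *ᵥ x) i.castSucc = (H *ᵥ (x ∘ Fin.castSucc)) i := by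
    intro i
    simp only [mulVec, dotProduct]
    rw [Fin.sum_univ_castSucc]
    simp [hx, homog_cc, Function.comp]
  simp only [dotProduct]
  rw [Fin.sum_univ_castSucc]
  simp [hx, h1, Function.comp]

lemma normsq_castSucc {n : ℕ} (x : Fin (n + 1) → ℝ) (hx : x (Fin.last n) = 0) :
    x ⬝ᵥ x = (x ∘ Fin.castSucc) ⬝ᵥ (x ∘ Fin.castSucc) := by
  simp only [dotProduct]
  rw [Fin.sum_univ_castSucc]
  simp [hx, Function.comp]


/-- If `λ_min(H) + δ ≥ c > 0`, the homogenized matrix has spectral gap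
`λ₂(F) - λ_min(F) ≥ λ_min(H) + δ ≥ c`. -/
theorem homog_spectral_gap {n : ℕ}
    (H : Matrix (Fin n) (Fin n) ℝ) (hH : H.IsHermitian)
    (g : Fin n → ℝ) (U_g U_H δ c : ℝ)
    (hg : Real.sqrt (g ⬝ᵥ g) ≤ U_g)
    (hHnorm : ‖Matrix.toEuclideanCLM (𝕜 := ℝ) H‖ ≤ U_H)
    (hδ : 0 < δ) (hc : 0 < c)
    (hF : (homog H g δ).IsHermitian)
    (hcgap : c ≤ (⨅ i, hH.eigenvalues i) + δ) :
    ∃ i₀ : Fin (n + 1), (∀ i, hF.eigenvalues i₀ ≤ hF.eigenvalues i) ∧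
      (∀ i, i ≠ i₀ → (⨅ j, hH.eigenvalues j) + δ ≤ hF.eigenvalues i - hF.eigenvalues i₀) ∧
      c ≤ (⨅ j, hH.eigenvalues j) + δ := by
  classical
  set F := homog H g δ with hFdef
  set μ := hF.eigenvalues with hμ
  set Λ := ⨅ j, hH.eigenvalues j with hΛ
  obtain ⟨i₀, hi₀⟩ := Finite.exists_min μ
  -- Fact A : μ i₀ ≤ -δ
  have factA : μ i₀ ≤ -δ := by
    set u : Fin (n + 1) → ℝ := Pi.single (Fin.last n) 1 with hu
    have hu1 : u ⬝ᵥ u = 1 := by simp [hu, dotProduct, Pi.single_apply]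
    have hu2 : u ⬝ᵥ (F *ᵥ u) = -δ := by
      have : F *ᵥ u = fun i => F i (Fin.last n) := by
        ext i; simp [hu, mulVec, dotProduct, Pi.single_apply]
      rw [this]
      simp [hu, dotProduct, Pi.single_apply]
      exact homog_ll H g δ
    have h1 : (⨅ j, μ j) * (u ⬝ᵥ u) ≤ u ⬝ᵥ (F *ᵥ u) := rayleigh_lower hF u
    have h2 : μ i₀ ≤ ⨅ j, μ j := le_ciInf hi₀
    rw [hu1, mul_one, hu2] at h1
    exact h2.trans h1
  refine ⟨i₀, hi₀, ?_, hcgap⟩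
  intro i hne
  rcases Nat.eq_zero_or_pos n with hn | hn
  · subst hn
    exact absurd (Fin.ext (show (i:ℕ) = i₀ by omega)) hne
  haveI : Nonempty (Fin n) := ⟨⟨0, hn⟩⟩
  by_contra hcon
  push_neg at hcon
  have hμiΛ : μ i < Λ := by linarith
  have hμ₀Λ : μ i₀ < Λ := lt_of_le_of_lt (hi₀ i) hμiΛ
  set v : Fin (n + 1) → ℝ := ⇑(hF.eigenvectorBasis i) with hv
  set w : Fin (n + 1) → ℝ := ⇑(hF.eigenvectorBasis i₀) with hw
  have hFv : F *ᵥ v = μ i • v := hF.mulVec_eigenvectorBasis i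
  have hFw : F *ᵥ w = μ i₀ • w := hF.mulVec_eigenvectorBasis i₀
  have hvv : v ⬝ᵥ v = 1 := by rw [hv]; simpa using eigvec_dot hF i i
  have hww : w ⬝ᵥ w = 1 := by rw [hw]; simpa using eigvec_dot hF i₀ i₀
  have hvw : v ⬝ᵥ w = 0 := by rw [hv, hw]; simpa [hne] using eigvec_dot hF i i₀
  have hwv : w ⬝ᵥ v = 0 := by rw [hv, hw]; simpa [Ne.symm hne] using eigvec_dot hF i₀ i
  obtain ⟨a, b, hab0, habx⟩ :
      ∃ a b : ℝ, (a ≠ 0 ∨ b ≠ 0) ∧ a * v (Fin.last n) + b * w (Fin.last n) = 0 := by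
    by_cases hwe : w (Fin.last n) = 0
    · exact ⟨0, 1, Or.inr one_ne_zero, by simp [hwe]⟩
    · exact ⟨1, -(v (Fin.last n)) / (w (Fin.last n)), Or.inl one_ne_zero, by field_simp; ring⟩
  set x : Fin (n + 1) → ℝ := a • v + b • w with hx
  have hxlast : x (Fin.last n) = 0 := by
    simpa [hx, smul_eq_mul] using habx
  have hxFx : x ⬝ᵥ (F *ᵥ x) = a ^ 2 * μ i + b ^ 2 * μ i₀ := by
    rw [hx, mulVec_add, mulVec_smul, mulVec_smul, hFv, hFw]
    simp [dotProduct_add, add_dotProduct, dotProduct_smul, smul_dotProduct, hvv, hww, hvw, hwv,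
      smul_eq_mul]
    ring
  have hxx : x ⬝ᵥ x = a ^ 2 + b ^ 2 := by
    rw [hx]
    simp [dotProduct_add, add_dotProduct, dotProduct_smul, smul_dotProduct, hvv, hww, hvw, hwv,
      smul_eq_mul]
    ring
  have hlow : Λ * (a ^ 2 + b ^ 2) ≤ a ^ 2 * μ i + b ^ 2 * μ i₀ := by
    have h1 := rayleigh_lower hH (x ∘ Fin.castSucc)
    rw [← homog_quadform H g δ x hxlast, ← normsq_castSucc x hxlast, hxx, hxFx] at h1
    exact h1
  have hstrict : a ^ 2 * μ i + b ^ 2 * μ i₀ < Λ * (a ^ 2 + b ^ 2) := by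
    rcases hab0 with ha | hb
    · have ha2 : 0 < a ^ 2 := by positivity
      nlinarith [sq_nonneg b]
    · have hb2 : 0 < b ^ 2 := by positivity
      nlinarith [sq_nonneg a]
  linarith
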